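/- arXiv:1004.4761 — 2 statements merged into one kernel-verified Lean document; each statement's English description precedes it below -/
import Mathlib

section
/- Let A be an n×n complex matrix with index 1 (so rank A² = rank A = r). Then the (i,j) entry of the group inverse A^# equals (Σ_{β ∈ J_{r,n}{i}} |(A²_{.i}(a_{.j}))_β^β|) / (Σ_{β ∈ J_{r,n}} |(A²)_β^β|), where a_{.j} is the j-th column of A. -/
open Matrix Finset

namespace GroupInvAux

open Polynomial

variable {n : ℕ}

lemma det_submatrix_comp_equiv (N : Matrix (Fin n) (Fin n) ℂ) {m m' : Type*}
    [Fintype m] [Fintype m'] [DecidableEq m] [DecidableEq m']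
    (e : m ≃ m') (f : m' → Fin n) :
    det (N.submatrix (f ∘ e) (f ∘ e)) = det (N.submatrix f f) := by
  rw [← Matrix.det_submatrix_equiv_self e (N.submatrix f f), Matrix.submatrix_submatrix]

lemma det_minor_orderEmb (N : Matrix (Fin n) (Fin n) ℂ) (β : Finset (Fin n)) {k : ℕ}
    (h : β.card = k) :
    det (N.submatrix (β.orderEmbOfFin h) (β.orderEmbOfFin h))
    = det (N.submatrix ((↑) : {a // a ∈ β} → Fin n) ((↑) : {a // a ∈ β} → Fin n)) := by
  rw [show ((β.orderEmbOfFin h : Fin k → Fin n))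
      = (((↑) : {a // a ∈ β} → Fin n) ∘ (β.orderIsoOfFin h).toEquiv) from
    funext fun x => (β.coe_orderIsoOfFin_apply h x).symm, det_submatrix_comp_equiv]

lemma det_submatrix_eq_zero {N : Matrix (Fin n) (Fin n) ℂ} {β : Finset (Fin n)}
    (hrank : N.rank < β.card) :
    det (N.submatrix ((↑) : {a // a ∈ β} → Fin n) ((↑) : {a // a ∈ β} → Fin n)) = 0 := by
  by_contra hdet
  have hU : IsUnit (N.submatrix ((↑) : {a // a ∈ β} → Fin n) ((↑) : {a // a ∈ β} → Fin n)) :=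
    (isUnit_iff_isUnit_det _).mpr (isUnit_iff_ne_zero.mpr hdet)
  have hfac : N.submatrix ((↑) : {a // a ∈ β} → Fin n) ((↑) : {a // a ∈ β} → Fin n)
      = (Matrix.of fun (a : {a // a ∈ β}) (k : Fin n) => if (a : Fin n) = k then (1:ℂ) else 0)
        * N * (Matrix.of fun (k : Fin n) (b : {a // a ∈ β}) =>
          if (b : Fin n) = k then (1:ℂ) else 0) := by
    ext a b
    simp [Matrix.mul_apply, Finset.sum_ite_eq, Finset.sum_ite_eq']
  have hle : (N.submatrix ((↑) : {a // a ∈ β} → Fin n) ((↑) : {a // a ∈ β} → Fin n)).rank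
      ≤ N.rank := by
    rw [hfac]
    exact le_trans (Matrix.rank_mul_le_left _ _)
      (le_trans (Matrix.rank_mul_le_right _ _) le_rfl)
  have hcard : (N.submatrix ((↑) : {a // a ∈ β} → Fin n) ((↑) : {a // a ∈ β} → Fin n)).rank
      = β.card := by
    rw [Matrix.rank_of_isUnit _ hU, Fintype.card_coe]
  omega

lemma isUnit_of_rank_eq {k : ℕ} (M : Matrix (Fin k) (Fin k) ℂ) (h : M.rank = k) : IsUnit M := by
  have htop : LinearMap.range M.mulVecLin = ⊤ := by
    apply Submodule.eq_top_of_finrank_eq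
    rw [← Matrix.rank, h]
    simp [Module.finrank_fintype_fun_eq_card]
  have hsurj : Function.Surjective M.mulVecLin := LinearMap.range_eq_top.mp htop
  have hinj : Function.Injective (M.mulVec) := by
    have := (LinearMap.injective_iff_surjective (f := M.mulVecLin)).mpr hsurj
    exact this
  exact Matrix.mulVec_injective_iff_isUnit.mp hinj

lemma det_block (S : Finset (Fin n)) (M : Matrix (Fin n) (Fin n) ℂ) :
    det (Matrix.of fun j k => if j ∈ S then ((X : ℂ[X]) • (1 : Matrix (Fin n) (Fin n) ℂ[X])) j k
        else Polynomial.C (M j k))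
    = Polynomial.C (det (M.submatrix ((↑) : {a // ¬ a ∈ S} → Fin n) ((↑) : {a // ¬ a ∈ S} → Fin n)))
      * X ^ S.card := by
  classical
  set T : Matrix (Fin n) (Fin n) ℂ[X] := Matrix.of fun j k =>
    if j ∈ S then ((X : ℂ[X]) • (1 : Matrix (Fin n) (Fin n) ℂ[X])) j k else Polynomial.C (M j k)
  let e : {a : Fin n // a ∈ S} ⊕ {a : Fin n // ¬ a ∈ S} ≃ Fin n := Equiv.sumCompl (· ∈ S)
  have hdet : det T = det (T.submatrix e e) := (det_submatrix_equiv_self e T).symm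
  have hblock : T.submatrix e e =
      Matrix.fromBlocks ((X : ℂ[X]) • (1 : Matrix {a : Fin n // a ∈ S} {a : Fin n // a ∈ S} ℂ[X]))
        0
        (Matrix.of fun (a : {a : Fin n // ¬ a ∈ S}) (b : {a : Fin n // a ∈ S}) =>
          Polynomial.C (M a b))
        ((M.submatrix ((↑) : {a // ¬ a ∈ S} → Fin n) ((↑) : {a // ¬ a ∈ S} → Fin n)).map
          Polynomial.C) := by
    ext a b
    cases a with
    | inl a => cases b with
      | inl b =>
        by_cases hab : a = b
        · subst hab; simp [T, e, Matrix.smul_apply, Matrix.one_apply, a.2]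
        · have hab' : (a : Fin n) ≠ b := fun h => hab (Subtype.ext h)
          simp [T, e, Matrix.smul_apply, Matrix.one_apply, a.2, hab, hab']
      | inr b =>
        have hab : (a : Fin n) ≠ (b : Fin n) := by
          intro h; exact b.2 (h ▸ a.2)
        simp [T, e, Matrix.smul_apply, Matrix.one_apply, a.2, hab]
    | inr a => cases b with
      | inl b => simp [T, e, a.2]
      | inr b => simp [T, e, a.2]
  rw [hdet, hblock, Matrix.det_fromBlocks_zero₁₂, Matrix.det_smul, det_one,
    mul_one, Fintype.card_coe, mul_comm]
  congr 1
  rw [← RingHom.mapMatrix_apply, RingHom.map_det]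

lemma coeff_det_updateRow (M : Matrix (Fin n) (Fin n) ℂ) (i : Fin n) (b : Fin n → ℂ) (k : ℕ) :
    (det ((((X : ℂ[X]) • (1 : Matrix (Fin n) (Fin n) ℂ[X]) + M.map Polynomial.C)).updateRow i
      (fun s => Polynomial.C (b s)))).coeff k
    = ∑ β : Finset (Fin n), if i ∈ β ∧ β.card + k = n
        then det ((M.updateRow i b).submatrix ((↑) : {a // a ∈ β} → Fin n)
          ((↑) : {a // a ∈ β} → Fin n))
        else 0 := by
  classical
  set u : Fin n → Fin n → ℂ[X] := fun j =>
    if j = i then 0 else ((X : ℂ[X]) • (1 : Matrix (Fin n) (Fin n) ℂ[X])) j with hu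
  set v : Fin n → Fin n → ℂ[X] := fun j =>
    if j = i then (fun s => Polynomial.C (b s)) else fun s => Polynomial.C (M j s) with hv
  have hmat : ((((X : ℂ[X]) • (1 : Matrix (Fin n) (Fin n) ℂ[X]) + M.map Polynomial.C)).updateRow i
      (fun s => Polynomial.C (b s))) = Matrix.of (u + v) := by
    ext j s
    by_cases hj : j = i <;>
      simp [hu, hv, hj, Matrix.updateRow_apply, Matrix.add_apply, Matrix.map_apply]
  have hdet : det (Matrix.of (u + v)) = ∑ S : Finset (Fin n), det (Matrix.of (S.piecewise u v)) :=
    (Matrix.detRowAlternating (R := ℂ[X]) (n := Fin n)).toMultilinearMap.map_add_univ u v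
  rw [hmat, hdet, Polynomial.finset_sum_coeff]
  have hterm : ∀ S : Finset (Fin n),
      (det (Matrix.of (S.piecewise u v))).coeff k
      = if ¬ i ∈ S ∧ S.card = k
          then det ((M.updateRow i b).submatrix ((↑) : {a // ¬ a ∈ S} → Fin n)
            ((↑) : {a // ¬ a ∈ S} → Fin n))
          else 0 := by
    intro S
    by_cases hiS : i ∈ S
    · have h0 : det (Matrix.of (S.piecewise u v)) = 0 := by
        apply det_eq_zero_of_row_eq_zero i
        intro s
        simp [Finset.piecewise, hiS, hu]
      simp [h0, hiS]
    · have heq : Matrix.of (S.piecewise u v) = Matrix.of fun j s =>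
          if j ∈ S then ((X : ℂ[X]) • (1 : Matrix (Fin n) (Fin n) ℂ[X])) j s
          else Polynomial.C ((M.updateRow i b) j s) := by
        refine Matrix.ext fun j s => ?_
        by_cases hj : j ∈ S
        · have hji : j ≠ i := fun h => hiS (h ▸ hj)
          simp [Finset.piecewise, hj, hu, hji]
        · by_cases hji : j = i
          · subst hji
            simp [Finset.piecewise, hj, hv, hiS, Matrix.updateRow_apply]
          · simp [Finset.piecewise, hj, hv, hji, Matrix.updateRow_apply]
      rw [heq, det_block, Polynomial.coeff_C_mul_X_pow]
      simp only [hiS, not_false_iff, true_and]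
      by_cases hc : S.card = k
      · simp [hc]
      · rw [if_neg (fun h => hc h.symm), if_neg hc]
  simp only [hterm]
  refine (Fintype.sum_bijective (fun β : Finset (Fin n) => βᶜ)
    (Function.Involutive.bijective (fun β => compl_compl β)) _ _ ?_).symm
  intro β
  have hcard : βᶜ.card = n - β.card := by
    rw [Finset.card_compl, Fintype.card_fin]
  have hle : β.card ≤ n := by
    simpa using Finset.card_le_univ β
  have hiff : (i ∈ β ∧ β.card + k = n) ↔ (¬ i ∈ βᶜ ∧ βᶜ.card = k) := by
    rw [Finset.mem_compl, not_not, hcard]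
    constructor
    · rintro ⟨h1, h2⟩; exact ⟨h1, by omega⟩
    · rintro ⟨h1, h2⟩; exact ⟨h1, by omega⟩
  by_cases hcond : i ∈ β ∧ β.card + k = n
  · rw [if_pos hcond, if_pos (hiff.mp hcond)]
    rw [show ((↑) : {a // a ∈ β} → Fin n)
        = (((↑) : {a // ¬ a ∈ βᶜ} → Fin n) ∘
            (Equiv.subtypeEquivRight (q := fun a => ¬ a ∈ βᶜ) (fun a => by simp)))
      from funext (fun a => rfl), det_submatrix_comp_equiv]
  · rw [if_neg hcond, if_neg (fun h => hcond (hiff.mpr h))]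

lemma coeff_det_poly (M : Matrix (Fin n) (Fin n) ℂ) (k : ℕ) :
    (det ((X : ℂ[X]) • (1 : Matrix (Fin n) (Fin n) ℂ[X]) + M.map Polynomial.C)).coeff k
    = ∑ β : Finset (Fin n), if β.card + k = n
        then det (M.submatrix ((↑) : {a // a ∈ β} → Fin n) ((↑) : {a // a ∈ β} → Fin n))
        else 0 := by
  classical
  set u : Fin n → Fin n → ℂ[X] := fun j => ((X : ℂ[X]) • (1 : Matrix (Fin n) (Fin n) ℂ[X])) j
    with hu
  set v : Fin n → Fin n → ℂ[X] := fun j => fun s => Polynomial.C (M j s) with hv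
  have hmat : ((X : ℂ[X]) • (1 : Matrix (Fin n) (Fin n) ℂ[X]) + M.map Polynomial.C)
      = Matrix.of (u + v) := by
    refine Matrix.ext fun j s => ?_
    simp [hu, hv, Matrix.add_apply, Matrix.map_apply]
  have hdet : det (Matrix.of (u + v)) = ∑ S : Finset (Fin n), det (Matrix.of (S.piecewise u v)) :=
    (Matrix.detRowAlternating (R := ℂ[X]) (n := Fin n)).toMultilinearMap.map_add_univ u v
  rw [hmat, hdet, Polynomial.finset_sum_coeff]
  have hterm : ∀ S : Finset (Fin n),
      (det (Matrix.of (S.piecewise u v))).coeff k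
      = if S.card = k
          then det (M.submatrix ((↑) : {a // ¬ a ∈ S} → Fin n) ((↑) : {a // ¬ a ∈ S} → Fin n))
          else 0 := by
    intro S
    have heq : Matrix.of (S.piecewise u v) = Matrix.of fun j s =>
        if j ∈ S then ((X : ℂ[X]) • (1 : Matrix (Fin n) (Fin n) ℂ[X])) j s
        else Polynomial.C (M j s) := by
      refine Matrix.ext fun j s => ?_
      by_cases hj : j ∈ S <;> simp [Finset.piecewise, hj, hu, hv]
    rw [heq, det_block, Polynomial.coeff_C_mul_X_pow]
    by_cases hc : S.card = k
    · simp [hc]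
    · rw [if_neg (fun h => hc h.symm), if_neg hc]
  simp only [hterm]
  refine (Fintype.sum_bijective (fun β : Finset (Fin n) => βᶜ)
    (Function.Involutive.bijective (fun β => compl_compl β)) _ _ ?_).symm
  intro β
  have hcard : βᶜ.card = n - β.card := by
    rw [Finset.card_compl, Fintype.card_fin]
  have hle : β.card ≤ n := by simpa using Finset.card_le_univ β
  by_cases hcond : β.card + k = n
  · rw [if_pos hcond, if_pos (by rw [hcard]; omega)]
    rw [show ((↑) : {a // a ∈ β} → Fin n)
        = (((↑) : {a // ¬ a ∈ βᶜ} → Fin n) ∘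
            (Equiv.subtypeEquivRight (q := fun a => ¬ a ∈ βᶜ) (fun a => by simp)))
      from funext (fun a => rfl), det_submatrix_comp_equiv]
  · rw [if_neg hcond, if_neg (by rw [hcard]; omega)]

lemma coeff_det_updateCol (M : Matrix (Fin n) (Fin n) ℂ) (i : Fin n) (b : Fin n → ℂ) (k : ℕ) :
    (det ((((X : ℂ[X]) • (1 : Matrix (Fin n) (Fin n) ℂ[X]) + M.map Polynomial.C)).updateCol i
      (fun s => Polynomial.C (b s)))).coeff k
    = ∑ β : Finset (Fin n), if i ∈ β ∧ β.card + k = n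
        then det ((M.updateCol i b).submatrix ((↑) : {a // a ∈ β} → Fin n)
          ((↑) : {a // a ∈ β} → Fin n))
        else 0 := by
  rw [← Matrix.det_transpose, ← Matrix.updateRow_transpose, Matrix.transpose_add,
    Matrix.transpose_smul, Matrix.transpose_one, ← Matrix.transpose_map,
    coeff_det_updateRow (Mᵀ) i b k]
  refine Finset.sum_congr rfl fun β _ => ?_
  by_cases hcond : i ∈ β ∧ β.card + k = n
  · rw [if_pos hcond, if_pos hcond]
    rw [show (Mᵀ.updateRow i b) = (M.updateCol i b)ᵀ from Matrix.updateRow_transpose,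
      ← Matrix.transpose_submatrix, Matrix.det_transpose]
  · rw [if_neg hcond, if_neg hcond]

lemma exists_rank_fact {r : ℕ} (A : Matrix (Fin n) (Fin n) ℂ) (hr : A.rank = r) :
    ∃ (B : Matrix (Fin n) (Fin r) ℂ) (C : Matrix (Fin r) (Fin n) ℂ), A = B * C := by
  classical
  have hfin : Module.finrank ℂ (LinearMap.range A.mulVecLin) = r := hr
  let bas : Module.Basis (Fin r) ℂ (LinearMap.range A.mulVecLin) :=
    Module.finBasisOfFinrankEq ℂ _ hfin
  refine ⟨Matrix.of (fun i k => ((bas k : Fin n → ℂ) i)),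
    Matrix.of (fun k j => bas.repr ⟨fun s => A s j, ⟨Pi.single j 1, by
      ext s; simp [Matrix.mulVecLin, Matrix.mulVec_single]⟩⟩ k), ?_⟩
  refine Matrix.ext fun i j => ?_
  rw [Matrix.mul_apply]
  have hsum := bas.sum_repr ⟨fun s => A s j, ⟨Pi.single j 1, by
    ext s; simp [Matrix.mulVecLin, Matrix.mulVec_single]⟩⟩
  have := congrArg (fun (x : LinearMap.range A.mulVecLin) => (x : Fin n → ℂ) i) hsum
  simp only [Submodule.coe_sum, Submodule.coe_smul, Finset.sum_apply, Pi.smul_apply,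
    smul_eq_mul] at this
  rw [← this]
  exact Finset.sum_congr rfl fun k _ => by simp [Matrix.of_apply, mul_comm]

lemma map_eval_poly {m : Type*} [Fintype m] [DecidableEq m] (M : Matrix m m ℂ) (t : ℂ) :
    Polynomial.eval t (det ((X : ℂ[X]) • (1 : Matrix m m ℂ[X]) + M.map Polynomial.C))
      = det (t • (1 : Matrix m m ℂ) + M) := by
  have h : ((X : ℂ[X]) • (1 : Matrix m m ℂ[X]) + M.map Polynomial.C).map (Polynomial.eval t)
      = t • (1 : Matrix m m ℂ) + M := by
    refine Matrix.ext fun i j => ?_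
    simp [Matrix.map_apply, Matrix.smul_apply, Matrix.one_apply, apply_ite]
  calc Polynomial.eval t (det ((X : ℂ[X]) • (1 : Matrix m m ℂ[X]) + M.map Polynomial.C))
      = det (((Polynomial.evalRingHom t).mapMatrix)
          ((X : ℂ[X]) • (1 : Matrix m m ℂ[X]) + M.map Polynomial.C)) := by
        rw [← RingHom.map_det]; rfl
    _ = det (t • (1 : Matrix m m ℂ) + M) := by rw [RingHom.mapMatrix_apply]; exact congrArg det h

lemma coeff_det_ne_zero {r : ℕ} (A : Matrix (Fin n) (Fin n) ℂ) (hA : A.rank = r)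
    (hA2 : (A ^ 2).rank = r) (hrn : r ≤ n) :
    (det ((X : ℂ[X]) • (1 : Matrix (Fin n) (Fin n) ℂ[X]) + (A ^ 2).map Polynomial.C)).coeff (n - r)
      ≠ 0 := by
  classical
  obtain ⟨B, Cm, hBC⟩ := exists_rank_fact A hA
  set K : Matrix (Fin r) (Fin r) ℂ := Cm * B with hK
  have hA2f : A ^ 2 = B * ((K * Cm) : Matrix (Fin r) (Fin n) ℂ) := by
    rw [pow_two, hBC, hK, Matrix.mul_assoc, ← Matrix.mul_assoc Cm B Cm]
  have hKrank : K.rank = r := by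
    refine le_antisymm (le_trans (Matrix.rank_le_card_width K) (by simp)) ?_
    have h1 : (A ^ 2).rank ≤ K.rank := by
      have : A ^ 2 = (B * K) * Cm := by rw [hA2f]; exact (Matrix.mul_assoc B K Cm).symm
      rw [this]
      exact le_trans (Matrix.rank_mul_le_left _ _) (Matrix.rank_mul_le_right _ _)
    omega
  have hdetK : det K ≠ 0 := by
    have := isUnit_of_rank_eq K hKrank
    exact ((Matrix.isUnit_iff_isUnit_det K).mp this).ne_zero
  rcases eq_or_lt_of_le hrn with heq | hlt
  · have hnr : n - r = 0 := by omega
    rw [hnr, Polynomial.coeff_zero_eq_eval_zero, map_eval_poly]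
    have h0 : (0 : ℂ) • (1 : Matrix (Fin n) (Fin n) ℂ) + A ^ 2 = A ^ 2 := by simp
    rw [h0]
    have hu : IsUnit (A ^ 2) := isUnit_of_rank_eq _ (by rw [hA2]; omega)
    exact ((Matrix.isUnit_iff_isUnit_det _).mp hu).ne_zero
  · have hdetA2 : det (A ^ 2) = 0 := by
      by_contra h
      have hu : IsUnit (A ^ 2) := (Matrix.isUnit_iff_isUnit_det _).mpr (isUnit_iff_ne_zero.mpr h)
      have := Matrix.rank_of_isUnit _ hu
      rw [hA2, Fintype.card_fin] at this
      omega
    have key : det ((X : ℂ[X]) • (1 : Matrix (Fin n) (Fin n) ℂ[X]) + (A ^ 2).map Polynomial.C)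
        = X ^ (n - r) *
          det ((X : ℂ[X]) • (1 : Matrix (Fin r) (Fin r) ℂ[X]) + (K ^ 2).map Polynomial.C) := by
      apply Polynomial.funext
      intro t
      rw [Polynomial.eval_mul, Polynomial.eval_pow, Polynomial.eval_X, map_eval_poly,
        map_eval_poly]
      by_cases ht : t = 0
      · subst ht
        have : (0:ℂ) ^ (n - r) = 0 := zero_pow (by omega)
        simp [hdetA2, this]
      · have hsmul1 : t • (1 : Matrix (Fin n) (Fin n) ℂ) + A ^ 2
            = t • ((1 : Matrix (Fin n) (Fin n) ℂ) + (t⁻¹ • B) * (K * Cm)) := by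
          rw [smul_add, Matrix.smul_mul, smul_smul, mul_inv_cancel₀ ht, one_smul, hA2f]
        have hKB : (K * Cm) * (t⁻¹ • B) = t⁻¹ • K ^ 2 := by
          rw [Matrix.mul_smul, pow_two, hK, Matrix.mul_assoc]
        have hsmul2 : t • (1 : Matrix (Fin r) (Fin r) ℂ) + K ^ 2
            = t • ((1 : Matrix (Fin r) (Fin r) ℂ) + (K * Cm) * (t⁻¹ • B)) := by
          rw [hKB, smul_add, smul_smul, mul_inv_cancel₀ ht, one_smul]
        rw [hsmul1, hsmul2, Matrix.det_smul, Matrix.det_smul, Fintype.card_fin, Fintype.card_fin,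
          Matrix.det_one_add_mul_comm]
        rw [show t ^ n = t ^ (n - r) * t ^ r from by
          rw [← pow_add]; congr 1; omega]
        ring
    rw [key]
    have hc : (X ^ (n - r) *
        det ((X : ℂ[X]) • (1 : Matrix (Fin r) (Fin r) ℂ[X]) + (K ^ 2).map Polynomial.C)).coeff
          (n - r)
        = (det ((X : ℂ[X]) • (1 : Matrix (Fin r) (Fin r) ℂ[X]) + (K ^ 2).map Polynomial.C)).coeff
          0 := by
      have := Polynomial.coeff_X_pow_mul
        (det ((X : ℂ[X]) • (1 : Matrix (Fin r) (Fin r) ℂ[X]) + (K ^ 2).map Polynomial.C))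
        (n - r) 0
      simpa using this
    rw [hc, Polynomial.coeff_zero_eq_eval_zero, map_eval_poly]
    have h0 : (0 : ℂ) • (1 : Matrix (Fin r) (Fin r) ℂ) + K ^ 2 = K ^ 2 := by simp
    rw [h0, Matrix.det_pow]
    exact pow_ne_zero 2 hdetK

end GroupInvAux

theorem group_inverse_det_rep (n r : ℕ) (hr1 : 1 ≤ r)
    (A : Matrix (Fin n) (Fin n) ℂ)
    (hk : (A ^ 2).rank = A.rank) (hr : A.rank = r)
    (X : Matrix (Fin n) (Fin n) ℂ)
    (h1 : A ^ 2 * X = A) (h2 : X * A * X = X) (h3 : A * X = X * A) :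
    ∀ i j : Fin n,
      X i j =
        (∑ β : Finset (Fin n), if i ∈ β then
            (if h : β.card = r then
              det (((A ^ 2).updateCol i (fun s => A s j)).submatrix
                (β.orderEmbOfFin h) (β.orderEmbOfFin h)) else 0) else 0) /
        (∑ β : Finset (Fin n), if h : β.card = r then
            det ((A ^ 2).submatrix (β.orderEmbOfFin h) (β.orderEmbOfFin h)) else 0) := by
  intro i j
  classical
  have hrn : r ≤ n := by
    rw [← hr]
    simpa using A.rank_le_card_width
  have hA2rank : (A ^ 2).rank = r := hk.trans hr
  set P : Matrix (Fin n) (Fin n) (Polynomial ℂ) :=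
    (Polynomial.X : Polynomial ℂ) • (1 : Matrix (Fin n) (Fin n) (Polynomial ℂ)) + (A ^ 2).map Polynomial.C with hP
  set q : Polynomial ℂ := det P with hq
  set D : ℂ := q.coeff (n - r) with hD
  have hDne : D ≠ 0 := by
    rw [hD, hq, hP]
    exact GroupInvAux.coeff_det_ne_zero A hr hA2rank hrn
  have hden : (∑ β : Finset (Fin n), if h : β.card = r then
      det ((A ^ 2).submatrix (β.orderEmbOfFin h) (β.orderEmbOfFin h)) else 0) = D := by
    rw [hD, hq, hP, GroupInvAux.coeff_det_poly]
    refine Finset.sum_congr rfl fun β _ => ?_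
    by_cases hb : β.card = r
    · rw [dif_pos hb, if_pos (by omega), GroupInvAux.det_minor_orderEmb]
    · rw [dif_neg hb, if_neg (fun h => hb (by omega))]
  have hadj : (adjugate P * (A.map Polynomial.C)) i j
      = det (P.updateCol i fun s => Polynomial.C (A s j)) := by
    have hmv : (adjugate P * (A.map Polynomial.C)) i j
        = (adjugate P *ᵥ fun s => Polynomial.C (A s j)) i := by
      simp [Matrix.mul_apply, Matrix.mulVec, Matrix.map_apply, dotProduct]
    rw [hmv, ← Matrix.cramer_eq_adjugate_mulVec, Matrix.cramer_apply]
  have hnum : (∑ β : Finset (Fin n), if i ∈ β then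
      (if h : β.card = r then
        det (((A ^ 2).updateCol i (fun s => A s j)).submatrix
          (β.orderEmbOfFin h) (β.orderEmbOfFin h)) else 0) else 0)
      = ((adjugate P * (A.map Polynomial.C)) i j).coeff (n - r) := by
    rw [hadj, hP, GroupInvAux.coeff_det_updateCol]
    refine Finset.sum_congr rfl fun β _ => ?_
    by_cases hib : i ∈ β
    · by_cases hb : β.card = r
      · rw [if_pos hib, dif_pos hb, if_pos ⟨hib, by omega⟩, GroupInvAux.det_minor_orderEmb]
      · rw [if_pos hib, dif_neg hb,
          if_neg (fun h => hb (by have := h.2; omega))]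
    · rw [if_neg hib, if_neg (fun h => hib h.1)]
  have hXAX : X = A * (X * X) := by
    calc X = X * A * X := h2.symm
      _ = (A * X) * X := by rw [h3]
      _ = A * (X * X) := Matrix.mul_assoc _ _ _
  have hPX : P * (X.map Polynomial.C)
      = (Polynomial.X : Polynomial ℂ) • (X.map Polynomial.C) + A.map Polynomial.C := by
    rw [hP, Matrix.add_mul, Matrix.smul_mul, Matrix.one_mul, ← Matrix.map_mul, h1]
  have hid : adjugate P * (A.map Polynomial.C)
      = q • (X.map Polynomial.C)
        - (Polynomial.X : Polynomial ℂ) • (adjugate P * (X.map Polynomial.C)) := by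
    have hAC : A.map Polynomial.C
        = P * (X.map Polynomial.C) - (Polynomial.X : Polynomial ℂ) • (X.map Polynomial.C) := by
      rw [hPX]; abel
    rw [hAC, Matrix.mul_sub, ← Matrix.mul_assoc, Matrix.adjugate_mul, Matrix.smul_mul,
      Matrix.one_mul, Matrix.mul_smul, ← hq]
  set G : ℕ → Matrix (Fin n) (Fin n) ℂ :=
    fun m => Matrix.of fun a b => ((adjugate P) a b).coeff m with hG
  have hcoeff_mul : ∀ (m : ℕ) (N : Matrix (Fin n) (Fin n) ℂ) (a b : Fin n),
      ((adjugate P * (N.map Polynomial.C)) a b).coeff m = (G m * N) a b := by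
    intro m N a b
    simp [Matrix.mul_apply, Polynomial.finset_sum_coeff, Polynomial.coeff_mul_C,
      Matrix.map_apply, hG]
  have hqc : ∀ t : ℕ, t + r < n → q.coeff t = 0 := by
    intro t ht
    rw [hq, hP, GroupInvAux.coeff_det_poly]
    refine Finset.sum_eq_zero fun β _ => ?_
    by_cases hb : β.card + t = n
    · rw [if_pos hb]
      apply GroupInvAux.det_submatrix_eq_zero
      rw [hA2rank]
      omega
    · rw [if_neg hb]
  have hrelmat : (Polynomial.X : Polynomial ℂ) • adjugate P + adjugate P * ((A ^ 2).map Polynomial.C)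
      = q • (1 : Matrix (Fin n) (Fin n) (Polynomial ℂ)) := by
    calc (Polynomial.X : Polynomial ℂ) • adjugate P + adjugate P * ((A ^ 2).map Polynomial.C)
        = adjugate P * ((Polynomial.X : Polynomial ℂ) • (1 : Matrix (Fin n) (Fin n) (Polynomial ℂ)))
          + adjugate P * ((A ^ 2).map Polynomial.C) := by
          rw [Matrix.mul_smul, Matrix.mul_one]
      _ = adjugate P * P := by rw [← Matrix.mul_add, ← hP]
      _ = q • 1 := by rw [Matrix.adjugate_mul, ← hq]
  have hsmul_one : ∀ (m : ℕ) (a b : Fin n),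
      ((q • (1 : Matrix (Fin n) (Fin n) (Polynomial ℂ))) a b).coeff m
        = (q.coeff m • (1 : Matrix (Fin n) (Fin n) ℂ)) a b := by
    intro m a b
    by_cases hab : a = b <;> simp [Matrix.smul_apply, Matrix.one_apply, hab]
  have hrel0 : G 0 * (A ^ 2) = q.coeff 0 • (1 : Matrix (Fin n) (Fin n) ℂ) := by
    refine Matrix.ext fun a b => ?_
    have hL : (((Polynomial.X : Polynomial ℂ) • adjugate P
        + adjugate P * ((A ^ 2).map Polynomial.C)) a b).coeff 0 = (G 0 * (A ^ 2)) a b := by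
      rw [Matrix.add_apply, Polynomial.coeff_add,
        show ((Polynomial.X : Polynomial ℂ) • adjugate P) a b
          = Polynomial.X * (adjugate P) a b from rfl,
        Polynomial.mul_coeff_zero, Polynomial.coeff_X_zero, zero_mul, zero_add, hcoeff_mul]
    rw [← hL, hrelmat, hsmul_one]
  have hrelS : ∀ m : ℕ, G m + G (m + 1) * (A ^ 2)
      = q.coeff (m + 1) • (1 : Matrix (Fin n) (Fin n) ℂ) := by
    intro m
    refine Matrix.ext fun a b => ?_
    have hL : (((Polynomial.X : Polynomial ℂ) • adjugate P
        + adjugate P * ((A ^ 2).map Polynomial.C)) a b).coeff (m + 1)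
        = (G m + G (m + 1) * (A ^ 2)) a b := by
      rw [Matrix.add_apply, Polynomial.coeff_add,
        show ((Polynomial.X : Polynomial ℂ) • adjugate P) a b
          = Polynomial.X * (adjugate P) a b from rfl,
        Polynomial.coeff_X_mul, hcoeff_mul, Matrix.add_apply]
      simp [hG]
    rw [← hL, hrelmat, hsmul_one]
  have hGzero : ∀ m : ℕ, m + r < n → G m * A = 0 ∧ G m * X = 0 := by
    intro m
    induction m with
    | zero =>
      intro h0
      have h2' : G 0 * (A ^ 2) = 0 := by rw [hrel0, hqc 0 h0, zero_smul]
      have hGA : G 0 * A = 0 := by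
        rw [← h1, ← Matrix.mul_assoc, h2', Matrix.zero_mul]
      refine ⟨hGA, ?_⟩
      rw [hXAX, ← Matrix.mul_assoc, hGA, Matrix.zero_mul]
    | succ m ih =>
      intro hlt
      obtain ⟨ihA, ihX⟩ := ih (by omega)
      have h2' : G (m + 1) * (A ^ 2) = - G m := by
        have hs := hrelS m
        rw [hqc (m + 1) hlt, zero_smul] at hs
        exact eq_neg_of_add_eq_zero_right hs
      have hGA : G (m + 1) * A = 0 := by
        rw [← h1, ← Matrix.mul_assoc, h2', Matrix.neg_mul, ihX, neg_zero]
      refine ⟨hGA, ?_⟩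
      rw [hXAX, ← Matrix.mul_assoc, hGA, Matrix.zero_mul]
  have hXW0 : (((Polynomial.X : Polynomial ℂ) • (adjugate P * (X.map Polynomial.C))) i j).coeff (n - r)
      = 0 := by
    rw [show ((Polynomial.X : Polynomial ℂ) • (adjugate P * (X.map Polynomial.C))) i j
        = Polynomial.X * ((adjugate P * (X.map Polynomial.C)) i j) from rfl]
    cases hnr : n - r with
    | zero => rw [Polynomial.mul_coeff_zero, Polynomial.coeff_X_zero, zero_mul]
    | succ m =>
      rw [Polynomial.coeff_X_mul, hcoeff_mul m X i j, (hGzero m (by omega)).2,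
        Matrix.zero_apply]
  have hkey : ((adjugate P * (A.map Polynomial.C)) i j).coeff (n - r) = D * X i j := by
    rw [hid, Matrix.sub_apply, Polynomial.coeff_sub, hXW0, sub_zero,
      show (q • (X.map Polynomial.C)) i j = q * Polynomial.C (X i j) from by
        simp [Matrix.smul_apply, Matrix.map_apply, smul_eq_mul],
      Polynomial.coeff_mul_C]
  rw [hden, hnum, hkey, mul_comm, mul_div_assoc, div_self hDne, mul_one]
end

section
/- Let A be an n×n complex matrix with index k and r = rank A^k. Then for y ∈ ℂⁿ, the Drazin inverse solution x̂ = A^D y of Ax = y has components x̂_i = (Σ_{β ∈ J_{r,n}{i}} |(A^{k+1}_{.i}(g))_β^β|) / (Σ_{β ∈ J_{r,n}} |(A^{k+1})_β^β|), where g = A^k y. -/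
open Matrix Finset

open Polynomial in
lemma aux_det_add_sum_piecewise {R : Type*} [CommRing R] {m : ℕ}
    (B E : Matrix (Fin m) (Fin m) R) :
    Matrix.det (E + B) = ∑ β : Finset (Fin m), Matrix.det (β.piecewise B E) := by
  rw [add_comm]
  exact (Matrix.detRowAlternating (R := R) (n := Fin m)).toMultilinearMap.map_add_univ B E

lemma aux_det_piecewise_one {R : Type*} [CommRing R] {m b : ℕ}
    (N : Matrix (Fin m) (Fin m) R) (β : Finset (Fin m)) (h : β.card = b) :
    Matrix.det (β.piecewise N (1 : Matrix (Fin m) (Fin m) R))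
      = (N.submatrix (β.orderEmbOfFin h) (β.orderEmbOfFin h)).det := by
  have hb : b ≤ m := by
    subst h; simpa using Finset.card_le_univ β
  have hc : βᶜ.card = m - b := by
    rw [Finset.card_compl, h]; simp
  set f := β.orderEmbOfFin h with hf
  set f' := βᶜ.orderEmbOfFin hc with hf'
  have hmemf : ∀ a, f a ∈ β := fun a => Finset.orderEmbOfFin_mem _ _ _
  have hmemf' : ∀ a, f' a ∉ β := fun a =>
    Finset.mem_compl.mp (Finset.orderEmbOfFin_mem βᶜ hc a)
  set g : Fin b ⊕ Fin (m - b) → Fin m := Sum.elim f f' with hg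
  have hginj : Function.Injective g := by
    rintro (a | a) (c | c) hac <;> simp only [hg, Sum.elim_inl, Sum.elim_inr] at hac
    · exact congrArg Sum.inl (f.injective hac)
    · exact absurd (hac ▸ hmemf a) (hmemf' c)
    · exact absurd (hac ▸ hmemf' a) (by simp [hmemf c])
    · exact congrArg Sum.inr (f'.injective hac)
  have hgbij : Function.Bijective g := by
    rw [Fintype.bijective_iff_injective_and_card]
    exact ⟨hginj, by simp [Nat.add_sub_cancel' hb]⟩
  set e := Equiv.ofBijective g hgbij with he
  refine (Matrix.det_submatrix_equiv_self e _).symm.trans ?_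
  have hmat : Matrix.submatrix (β.piecewise N (1 : Matrix (Fin m) (Fin m) R)) e e
      = Matrix.fromBlocks (N.submatrix f f) (N.submatrix f f') 0 1 := by
    ext a c
    have hpw : ∀ x y, β.piecewise N (1 : Matrix (Fin m) (Fin m) R) x y = if x ∈ β then N x y else (1 : Matrix (Fin m) (Fin m) R) x y := fun x y => by
      by_cases hx : x ∈ β <;> simp [Finset.piecewise, hx]
    have hee : ∀ x, e x = g x := fun x => rfl
    refine (hpw (e a) (e c)).trans ?_
    rcases a with a | a <;> rcases c with c | c <;>
      simp only [Matrix.submatrix_apply, hee, hg, Sum.elim_inl, Sum.elim_inr,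
        Matrix.fromBlocks_apply₁₁, Matrix.fromBlocks_apply₁₂, Matrix.fromBlocks_apply₂₁,
        Matrix.fromBlocks_apply₂₂, hpw, hmemf, hmemf', if_true, if_false]
    · have hne : f' a ≠ f c := fun hcon => absurd (hcon ▸ hmemf' a) (by simp [hmemf c])
      simp [Matrix.one_apply, hne]
    · simp [Matrix.one_apply, f'.injective.eq_iff]
  rw [hmat, Matrix.det_fromBlocks_zero₂₁, Matrix.det_one, mul_one]

open Polynomial in
lemma aux_natDegree_det_le {m : ℕ} (N : Matrix (Fin m) (Fin m) (Polynomial ℂ)) (d : Fin m → ℕ)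
    (h : ∀ i j, (N i j).natDegree ≤ d i) : N.det.natDegree ≤ ∑ i, d i := by
  rw [Matrix.det_apply]
  apply Polynomial.natDegree_sum_le_of_forall_le
  intro σ _
  have h1 : (Equiv.Perm.sign σ • ∏ i, N (σ i) i).natDegree
      = (∏ i, N (σ i) i).natDegree := by
    rcases Int.units_eq_one_or (Equiv.Perm.sign σ) with hs | hs <;>
      simp [hs, Polynomial.natDegree_neg]
  rw [h1]
  refine (Polynomial.natDegree_prod_le _ _).trans ?_
  have h2 : ∑ i, (N (σ i) i).natDegree ≤ ∑ i, d (σ i) :=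
    Finset.sum_le_sum fun i _ => h (σ i) i
  exact h2.trans_eq (Equiv.sum_comp σ d)

open Polynomial in
lemma aux_det_piecewise_smul {m : ℕ} (β : Finset (Fin m))
    (B E : Matrix (Fin m) (Fin m) (Polynomial ℂ)) :
    Matrix.det (β.piecewise ((Polynomial.X : ℂ[X]) • B) E)
      = (Polynomial.X : ℂ[X]) ^ β.card * Matrix.det (β.piecewise B E) := by
  have h1 : β.piecewise ((Polynomial.X : ℂ[X]) • B) E
      = Matrix.of fun i j => (if i ∈ β then (Polynomial.X : ℂ[X]) else 1) *
          (β.piecewise B E) i j := by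
    funext i j
    by_cases hi : i ∈ β <;>
      simp [Finset.piecewise, hi,
        Matrix.smul_apply, smul_eq_mul]
  rw [h1]
  refine (Matrix.det_mul_column _ _).trans ?_
  congr 1
  rw [Finset.prod_ite_mem, Finset.univ_inter, Finset.prod_const]

open Polynomial in
lemma aux_det_piecewise_mapC {m : ℕ} (N : Matrix (Fin m) (Fin m) ℂ) (β : Finset (Fin m)) :
    Matrix.det (β.piecewise (Nᵀ.map Polynomial.C) (1 : Matrix (Fin m) (Fin m) ℂ[X]))
      = Polynomial.C (Matrix.det (N.submatrix (β.orderEmbOfFin rfl) (β.orderEmbOfFin rfl))) := by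
  rw [aux_det_piecewise_one (Nᵀ.map Polynomial.C) β rfl]
  have h1 : (Nᵀ.map Polynomial.C).submatrix (β.orderEmbOfFin rfl) (β.orderEmbOfFin rfl)
      = ((N.submatrix (β.orderEmbOfFin rfl) (β.orderEmbOfFin rfl)).map Polynomial.C)ᵀ := rfl
  rw [h1, Matrix.det_transpose]
  exact (RingHom.map_det Polynomial.C _).symm

open Polynomial in
lemma aux_det_one_add {m : ℕ} (M : Matrix (Fin m) (Fin m) ℂ) :
    Matrix.det (1 + (Polynomial.X : ℂ[X]) • M.map Polynomial.C)
      = ∑ β : Finset (Fin m), (Polynomial.X : ℂ[X]) ^ β.card *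
          Polynomial.C (Matrix.det (M.submatrix (β.orderEmbOfFin rfl) (β.orderEmbOfFin rfl))) := by
  rw [← Matrix.det_transpose]
  have ht : (1 + (Polynomial.X : ℂ[X]) • M.map Polynomial.C)ᵀ
      = 1 + (Polynomial.X : ℂ[X]) • (Mᵀ.map Polynomial.C) := by
    rw [Matrix.transpose_add, Matrix.transpose_one, Matrix.transpose_smul, Matrix.transpose_map]
  rw [ht, aux_det_add_sum_piecewise]
  exact Finset.sum_congr rfl fun β _ => by
    rw [aux_det_piecewise_smul, aux_det_piecewise_mapC]

open Polynomial in
lemma aux_det_updateColumn_expand {m : ℕ} (M : Matrix (Fin m) (Fin m) ℂ) (g : Fin m → ℂ)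
    (i : Fin m) :
    Matrix.det ((1 + (Polynomial.X : ℂ[X]) • M.map Polynomial.C).updateCol i
        ((Polynomial.X : ℂ[X]) • fun j => Polynomial.C (g j)))
      = ∑ β : Finset (Fin m), (if i ∈ β then (Polynomial.X : ℂ[X]) ^ β.card *
          Polynomial.C (Matrix.det ((M.updateCol i g).submatrix
            (β.orderEmbOfFin rfl) (β.orderEmbOfFin rfl))) else 0) := by
  rw [← Matrix.det_transpose, ← Matrix.updateRow_transpose]
  have ht : (1 + (Polynomial.X : ℂ[X]) • M.map Polynomial.C)ᵀ
      = 1 + (Polynomial.X : ℂ[X]) • (Mᵀ.map Polynomial.C) := by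
    rw [Matrix.transpose_add, Matrix.transpose_one, Matrix.transpose_smul, Matrix.transpose_map]
  rw [ht]
  set E' : Matrix (Fin m) (Fin m) ℂ[X] :=
    (1 : Matrix (Fin m) (Fin m) ℂ[X]).updateRow i 0 with hE'
  set B' : Matrix (Fin m) (Fin m) ℂ[X] :=
    ((M.updateCol i g)ᵀ).map Polynomial.C with hB'
  have hsplit : (1 + (Polynomial.X : ℂ[X]) • (Mᵀ.map Polynomial.C)).updateRow i
      ((Polynomial.X : ℂ[X]) • fun j => Polynomial.C (g j))
      = E' + (Polynomial.X : ℂ[X]) • B' := by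
    ext j l
    by_cases hj : j = i
    · subst hj
      simp [hE', hB', Matrix.updateRow_self, Matrix.updateCol_apply, Matrix.transpose_apply,
        Matrix.map_apply, Matrix.add_apply, Matrix.smul_apply, smul_eq_mul]
    · simp [hE', hB', Matrix.updateRow_ne hj, Matrix.updateCol_apply, Matrix.transpose_apply,
        Matrix.map_apply, Matrix.add_apply, Matrix.smul_apply, hj, smul_eq_mul]
  rw [hsplit, aux_det_add_sum_piecewise]
  refine Finset.sum_congr rfl fun β _ => ?_
  rw [aux_det_piecewise_smul]
  by_cases hi : i ∈ β
  · rw [if_pos hi]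
    congr 1
    have hpw : β.piecewise B' E' = β.piecewise B' (1 : Matrix (Fin m) (Fin m) ℂ[X]) := by
      funext j
      by_cases hj : j ∈ β
      · simp only [Finset.piecewise, hj, if_true]
      · simp only [Finset.piecewise, hj, if_false]
        have hji : j ≠ i := fun hcon => hj (hcon ▸ hi)
        exact Matrix.updateRow_ne hji
    rw [hpw, hB', aux_det_piecewise_mapC]
  · rw [if_neg hi]
    have h0 : Matrix.det (β.piecewise B' E') = 0 :=
      Matrix.det_eq_zero_of_row_eq_zero i (fun l => by
        simp only [Finset.piecewise, hi, if_false]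
        simp [hE'])
    rw [h0, mul_zero]

lemma aux_idem_factor {m r : ℕ} (P : Matrix (Fin m) (Fin m) ℂ) (hP : P * P = P)
    (hrk : P.rank = r) :
    ∃ (U : Matrix (Fin m) (Fin r) ℂ) (V : Matrix (Fin r) (Fin m) ℂ),
      U * V = P ∧ V * U = 1 := by
  classical
  set f := P.mulVecLin with hf
  set Ran := LinearMap.range f with hRan
  have hfin : Module.finrank ℂ Ran = r := by rw [← hrk]; rfl
  let b : Module.Basis (Fin r) ℂ Ran := Module.finBasisOfFinrankEq ℂ Ran hfin
  have hfix : ∀ x : Ran, P *ᵥ (x : Fin m → ℂ) = (x : Fin m → ℂ) := by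
    rintro ⟨x, v, rfl⟩
    show P *ᵥ (P *ᵥ v) = P *ᵥ v
    rw [Matrix.mulVec_mulVec, hP]
  set U : Matrix (Fin m) (Fin r) ℂ := fun x l => (b l : Fin m → ℂ) x with hU
  set V : Matrix (Fin r) (Fin m) ℂ :=
    fun l j => b.repr (f.rangeRestrict (Pi.single j 1)) l with hV
  refine ⟨U, V, ?_, ?_⟩
  · ext x j
    have hsum := b.sum_repr (f.rangeRestrict (Pi.single j 1))
    have hcoe := congrArg (fun z : Ran => (z : Fin m → ℂ) x) hsum
    simp only [Submodule.coe_sum, Submodule.coe_smul, Finset.sum_apply, Pi.smul_apply,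
      smul_eq_mul] at hcoe
    have hval : ((f.rangeRestrict (Pi.single j 1) : Ran) : Fin m → ℂ) x = P x j := by
      show (P *ᵥ Pi.single j 1) x = P x j
      simp [Matrix.mulVec, dotProduct, Pi.single_apply]
    rw [Matrix.mul_apply]
    calc ∑ l, U x l * V l j = ∑ l, b.repr (f.rangeRestrict (Pi.single j 1)) l
          * (b l : Fin m → ℂ) x := by
          refine Finset.sum_congr rfl fun l _ => mul_comm _ _
      _ = P x j := by rw [← hval, ← hcoe]
  · ext l s
    have hbs : f.rangeRestrict ((b s : Fin m → ℂ)) = b s := by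
      apply Subtype.ext
      show P *ᵥ (b s : Fin m → ℂ) = _
      exact hfix (b s)
    have hdecomp : ((b s : Fin m → ℂ)) = ∑ j, (b s : Fin m → ℂ) j •
        (Pi.single j (1:ℂ) : Fin m → ℂ) := by
      funext x
      simp [Pi.single_apply, Finset.sum_apply, mul_comm]
    have key : b.repr (b s) l = ∑ j, (b s : Fin m → ℂ) j *
        b.repr (f.rangeRestrict (Pi.single j 1)) l := by
      conv_lhs => rw [← hbs, hdecomp]
      rw [map_sum, map_sum]
      simp [Finsupp.smul_apply, smul_eq_mul]
    rw [Matrix.mul_apply]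
    calc ∑ j, V l j * U j s
        = ∑ j, (b s : Fin m → ℂ) j * b.repr (f.rangeRestrict (Pi.single j 1)) l := by
          refine Finset.sum_congr rfl fun j _ => mul_comm _ _
      _ = b.repr (b s) l := key.symm
      _ = (1 : Matrix (Fin r) (Fin r) ℂ) l s := by
          rw [b.repr_self]
          simp [Matrix.one_apply, Finsupp.single_apply, eq_comm]

lemma aux_minor_congr {m r : ℕ} (N : Matrix (Fin m) (Fin m) ℂ) (β : Finset (Fin m))
    (h : β.card = r) :
    Matrix.det (N.submatrix (β.orderEmbOfFin rfl) (β.orderEmbOfFin rfl))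
      = Matrix.det (N.submatrix (β.orderEmbOfFin h) (β.orderEmbOfFin h)) := by
  subst h; rfl

set_option maxHeartbeats 4000000 in
theorem drazin_solution_cramer (n k r : ℕ) (hr1 : 1 ≤ r)
    (A : Matrix (Fin n) (Fin n) ℂ)
    (hk : (A ^ (k + 1)).rank = (A ^ k).rank)
    (hmin : ∀ l < k, (A ^ (l + 1)).rank ≠ (A ^ l).rank)
    (hr : (A ^ k).rank = r)
    (X : Matrix (Fin n) (Fin n) ℂ)
    (h1 : A ^ (k + 1) * X = A ^ k) (h2 : X * A * X = X) (h3 : A * X = X * A)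
    (y : Fin n → ℂ) :
    ∀ i : Fin n,
      X.mulVec y i =
        (∑ β : Finset (Fin n), if i ∈ β then
            (if h : β.card = r then
              det (((A ^ (k + 1)).updateCol i ((A ^ k).mulVec y)).submatrix
                (β.orderEmbOfFin h) (β.orderEmbOfFin h)) else 0) else 0) /
        (∑ β : Finset (Fin n), if h : β.card = r then
            det ((A ^ (k + 1)).submatrix (β.orderEmbOfFin h) (β.orderEmbOfFin h)) else 0) := by
  intro i
  have hn : 0 < n := i.pos
  -- ## basic commutation algebra
  have hAX : Commute A X := h3
  have hP : (A * X) * (A * X) = A * X := by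
    rw [mul_assoc, ← mul_assoc X A X, h2]
  have hstep : ∀ j : ℕ, A ^ (k + j + 1) * X = A ^ (k + j) := by
    intro j
    rw [show k + j + 1 = (k + 1) + j by omega, pow_add, mul_assoc, (hAX.pow_left j).eq,
      ← mul_assoc, h1, ← pow_add]
  have hAkX : ∀ j : ℕ, A ^ (k + j) * X ^ j = A ^ k := by
    intro j
    induction j with
    | zero => simp
    | succ j ih =>
      rw [show k + (j + 1) = k + j + 1 by omega, pow_succ' X j, ← mul_assoc, hstep j, ih]
  have hXA : X * A * (X * A) = X * A := by rw [← mul_assoc, mul_assoc X A X, ← mul_assoc, h2]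
  have hXAk : ∀ j : ℕ, (X * A) ^ (j + 1) = X * A := by
    intro j
    induction j with
    | zero => simp
    | succ j ih => rw [pow_succ, ih, hXA]
  have hXkAk : ∀ j : ℕ, X ^ j * A ^ j = (X * A) ^ j := fun j => (hAX.symm.mul_pow j).symm
  have hXk1Ak : X ^ (k + 1) * A ^ k = X := by
    rw [pow_succ' X k, mul_assoc, hXkAk]
    cases k with
    | zero => simp
    | succ m => rw [hXAk m, ← h3, ← mul_assoc, h2]
  set M := A ^ (k + 1) with hM
  have hPAk : ∀ j : ℕ, (A * X) ^ (j + 1) = A * X := by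
    intro j
    induction j with
    | zero => simp
    | succ j ih => rw [pow_succ, ih, hP]
  have hWM : X ^ (k + 1) * M = A * X := by
    rw [hM, hXkAk (k + 1), hXAk k, ← h3]
  have hMW : M * X ^ (k + 1) = A * X := by
    rw [hM, ← hAX.mul_pow (k + 1), hPAk k]
  have hMP : M * (A * X) = M := by
    rw [hM, ← Matrix.mul_assoc, ← pow_succ, hstep 1]
  have hPMl : (A * X) * M = M := by
    rw [hM, Matrix.mul_assoc, ← (hAX.pow_left (k + 1)).eq, ← Matrix.mul_assoc, ← pow_succ',
      hstep 1]
  have hPAkr : (A * X) * A ^ k = A ^ k := by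
    rw [Matrix.mul_assoc, ← (hAX.pow_left k).eq, ← Matrix.mul_assoc, ← pow_succ', h1]
  have hAkP : A ^ k * (A * X) = A ^ k := by
    rw [← Matrix.mul_assoc, ← pow_succ, h1]
  have hrn : r ≤ n := by
    rw [← hr]
    exact ((A ^ k).rank_le_card_width).trans (Fintype.card_fin n).le
  have hrankP : (A * X).rank = r := by
    refine le_antisymm ?_ ?_
    · calc (A * X).rank = (X ^ (k + 1) * M).rank := by rw [hWM]
        _ ≤ M.rank := Matrix.rank_mul_le_right _ _
        _ = r := by rw [hM, hk, hr]
    · calc r = (A ^ k).rank := hr.symm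
        _ = (A ^ k * (A * X)).rank := by rw [hAkP]
        _ ≤ (A * X).rank := Matrix.rank_mul_le_right _ _
  -- ## rank factorization of the spectral projection
  obtain ⟨U, V, hUV, hVU⟩ := aux_idem_factor (A * X) hP hrankP
  set W := X ^ (k + 1) with hW
  set N' := V * M * U with hN'
  have hNW : N' * (V * W * U) = 1 := by
    have e1 : N' * (V * W * U) = V * (M * (U * V) * W) * U := by
      simp only [hN', Matrix.mul_assoc]
    rw [e1, hUV, hMP, hMW, ← hUV,
      show V * (U * V) * U = (V * U) * (V * U) by simp only [Matrix.mul_assoc], hVU, one_mul]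
  have hWN : (V * W * U) * N' = 1 := by
    have e1 : (V * W * U) * N' = V * (W * ((U * V) * M)) * U := by
      simp only [hN', Matrix.mul_assoc]
    rw [e1, hUV, hPMl, hWM, ← hUV,
      show V * (U * V) * U = (V * U) * (V * U) by simp only [Matrix.mul_assoc], hVU, one_mul]
  have hdetN' : N'.det ≠ 0 := Matrix.det_ne_zero_of_right_inverse hNW
  -- ## the characteristic polynomial data
  set Mp := M.map Polynomial.C with hMp
  set Nt := (1 : Matrix (Fin n) (Fin n) (Polynomial ℂ)) + (Polynomial.X : Polynomial ℂ) • Mp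
    with hNt
  set dp := Nt.det with hdp
  have hdp' : dp = Matrix.det ((1 : Matrix (Fin r) (Fin r) (Polynomial ℂ))
      + (Polynomial.X : Polynomial ℂ) • N'.map Polynomial.C) := by
    have hsm : (Polynomial.X : Polynomial ℂ) • Mp
        = (U.map Polynomial.C) * ((Polynomial.X : Polynomial ℂ) • ((V.map Polynomial.C) * Mp)) := by
      rw [Matrix.mul_smul, ← Matrix.map_mul, ← Matrix.map_mul, hMp, ← Matrix.mul_assoc,
        hUV, hPMl]
    have h2' : ((Polynomial.X : Polynomial ℂ) • ((V.map Polynomial.C) * Mp)) * (U.map Polynomial.C)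
        = (Polynomial.X : Polynomial ℂ) • N'.map Polynomial.C := by
      rw [Matrix.smul_mul, hMp, ← Matrix.map_mul, ← Matrix.map_mul, hN']
    rw [hdp, hNt, hsm, Matrix.det_one_add_mul_comm, h2']
  have hdeg : dp.natDegree ≤ r := by
    rw [hdp']
    have hb := aux_natDegree_det_le ((1 : Matrix (Fin r) (Fin r) (Polynomial ℂ))
      + (Polynomial.X : Polynomial ℂ) • N'.map Polynomial.C) (fun _ => 1) ?_
    · simpa using hb
    · intro a c
      rw [Matrix.add_apply]
      refine (Polynomial.natDegree_add_le _ _).trans (max_le ?_ ?_)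
      · rw [Matrix.one_apply]
        split <;> simp
      · simp only [Matrix.smul_apply, Matrix.map_apply, smul_eq_mul]
        refine (Polynomial.natDegree_mul_le).trans ?_
        simp [Polynomial.natDegree_X_le]
  have he0 : ∀ j, r < j → dp.coeff j = 0 := fun j hj =>
    Polynomial.coeff_eq_zero_of_natDegree_lt (lt_of_le_of_lt hdeg hj)
  have her : dp.coeff r = N'.det := by
    rw [hdp', aux_det_one_add N', Polynomial.finset_sum_coeff]
    have hterm : ∀ β : Finset (Fin r),
        ((Polynomial.X : Polynomial ℂ) ^ β.card * Polynomial.C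
          (Matrix.det (N'.submatrix (β.orderEmbOfFin rfl) (β.orderEmbOfFin rfl)))).coeff r
        = if β = Finset.univ then
            (if h : β.card = r then
              Matrix.det (N'.submatrix (β.orderEmbOfFin h) (β.orderEmbOfFin h)) else 0) else 0 := by
      intro β
      rw [mul_comm, Polynomial.C_mul_X_pow_eq_monomial, Polynomial.coeff_monomial]
      by_cases hc : β.card = r
      · have hbu : β = Finset.univ := by
          apply Finset.eq_univ_of_card
          rw [hc, Fintype.card_fin]
        rw [if_pos hc, if_pos hbu, dif_pos hc, aux_minor_congr N' β hc]
      · rw [if_neg hc]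
        by_cases hbu : β = Finset.univ
        · exact absurd (by rw [hbu]; simp) hc
        · rw [if_neg hbu]
    rw [Finset.sum_congr rfl fun β _ => hterm β, Finset.sum_ite_eq' Finset.univ]
    have hcu : (Finset.univ : Finset (Fin r)).card = r := by simp
    rw [if_pos (Finset.mem_univ _), dif_pos hcu]
    have hemb : ⇑((Finset.univ : Finset (Fin r)).orderEmbOfFin hcu) = _root_.id := by
      have := Finset.orderEmbOfFin_unique hcu (f := _root_.id)
        (fun x => Finset.mem_univ x) strictMono_id
      exact this.symm
    rw [hemb, Matrix.submatrix_id_id]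
  -- ## coefficients of the adjugate
  set G := Nt.adjugate with hG
  set Gc : ℕ → Matrix (Fin n) (Fin n) ℂ :=
    fun j => Matrix.of fun a c => (G a c).coeff j with hGc
  have hsplit : G + (Polynomial.X : Polynomial ℂ) • (Mp * G) = dp • 1 := by
    have hmul := Matrix.mul_adjugate Nt
    rw [show Nt.adjugate = G from hG.symm, show Nt.det = dp from hdp.symm, hNt,
      Matrix.add_mul, Matrix.one_mul, Matrix.smul_mul] at hmul
    exact hmul
  have hMpG : ∀ (j : ℕ) (a c : Fin n), ((Mp * G) a c).coeff j = (M * Gc j) a c := by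
    intro j a c
    rw [Matrix.mul_apply, Polynomial.finset_sum_coeff, Matrix.mul_apply]
    refine Finset.sum_congr rfl fun m _ => ?_
    rw [hMp]
    simp only [Matrix.map_apply, Polynomial.coeff_C_mul, hGc, Matrix.of_apply]
  have hentry : ∀ a c, G a c + Polynomial.X * ((Mp * G) a c)
      = dp * (1 : Matrix (Fin n) (Fin n) (Polynomial ℂ)) a c := by
    intro a c
    have h0 := congrFun (congrFun hsplit a) c
    simpa only [Matrix.add_apply, Matrix.smul_apply, smul_eq_mul] using h0
  have hrec : ∀ j, Gc (j + 1) + M * Gc j = dp.coeff (j + 1) • 1 := by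
    intro j
    ext a c
    have h0c := congrArg (fun p => Polynomial.coeff p (j + 1)) (hentry a c)
    simp only [Polynomial.coeff_add, Polynomial.coeff_X_mul] at h0c
    rw [hMpG j a c] at h0c
    simp only [Matrix.add_apply, Matrix.smul_apply, smul_eq_mul, hGc, Matrix.of_apply]
    rw [h0c]
    by_cases hac : a = c <;> simp [Matrix.one_apply, hac]
  have hrec0 : Gc 0 = dp.coeff 0 • 1 := by
    ext a c
    have h0c := congrArg (fun p => Polynomial.coeff p 0) (hentry a c)
    simp only [Polynomial.coeff_add, Polynomial.mul_coeff_zero, Polynomial.coeff_X_zero,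
      zero_mul, add_zero] at h0c
    simp only [hGc, Matrix.of_apply, Matrix.smul_apply, smul_eq_mul]
    rw [h0c]
    by_cases hac : a = c <;> simp [Matrix.one_apply, hac]
  have hGcomm : ∀ (j : ℕ) (B : Matrix (Fin n) (Fin n) ℂ),
      B * M = M * B → B * Gc j = Gc j * B := by
    intro j
    induction j with
    | zero =>
      intro B _
      rw [hrec0, Matrix.mul_smul, Matrix.smul_mul, Matrix.mul_one, Matrix.one_mul]
    | succ j ih =>
      intro B hB
      have hGs : Gc (j + 1) = dp.coeff (j + 1) • 1 - M * Gc j := eq_sub_of_add_eq (hrec j)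
      rw [hGs, Matrix.mul_sub, Matrix.sub_mul, Matrix.mul_smul, Matrix.smul_mul,
        Matrix.mul_one, Matrix.one_mul, ← Matrix.mul_assoc, hB, Matrix.mul_assoc, ih B hB,
        ← Matrix.mul_assoc]
  have hGcn : Gc n = 0 := by
    ext a c
    have hdegG : (G a c).natDegree ≤ n - 1 := by
      rw [hG, Matrix.adjugate_apply]
      have hb := aux_natDegree_det_le (Nt.updateRow c (Pi.single a 1))
        (fun x => if x = c then 0 else 1) ?_
      · refine hb.trans ?_
        rw [← Finset.add_sum_erase _ _ (Finset.mem_univ c), if_pos rfl, zero_add]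
        rw [Finset.sum_congr rfl fun x hx => if_neg (Finset.ne_of_mem_erase hx)]
        rw [Finset.sum_const, smul_eq_mul, mul_one, Finset.card_erase_of_mem (Finset.mem_univ c)]
        simp
      · intro x j
        show (Nt.updateRow c (Pi.single a 1) x j).natDegree ≤ (if x = c then 0 else 1)
        by_cases hx : x = c
        · subst hx
          rw [Matrix.updateRow_self, if_pos rfl]
          rw [Pi.single_apply]
          split <;> simp
        · rw [Matrix.updateRow_ne hx, if_neg hx, hNt, Matrix.add_apply]
          refine (Polynomial.natDegree_add_le _ _).trans (max_le ?_ ?_)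
          · rw [Matrix.one_apply]; split <;> simp
          · simp only [Matrix.smul_apply, smul_eq_mul]
            refine (Polynomial.natDegree_mul_le).trans ?_
            simp [Polynomial.natDegree_X_le, hMp]
    have hlt : (G a c).natDegree < n := lt_of_le_of_lt hdegG (by omega)
    simp only [hGc, Matrix.of_apply, Matrix.zero_apply]
    exact Polynomial.coeff_eq_zero_of_natDegree_lt hlt
  have hMGr : M ^ (n - r) * Gc r = 0 := by
    have hneg : ∀ s : ℕ, Gc (r + s + 1) = -(M * Gc (r + s)) := by
      intro s
      have h := hrec (r + s)
      rw [he0 (r + s + 1) (by omega), zero_smul] at h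
      exact eq_neg_of_add_eq_zero_left h
    have hpow : ∀ s : ℕ, Gc (r + s) = ((-1 : ℂ) ^ s) • (M ^ s * Gc r) := by
      intro s
      induction s with
      | zero => simp
      | succ s ih =>
        rw [show r + (s + 1) = r + s + 1 by omega, hneg s, ih, Matrix.mul_smul,
          pow_succ, ← Matrix.mul_assoc, ← pow_succ']
        rw [← neg_smul]
        ring_nf
    have h0 := hpow (n - r)
    rw [show r + (n - r) = n by omega, hGcn] at h0
    have h0' := h0.symm
    rw [smul_eq_zero] at h0'
    rcases h0' with h | h
    · exact absurd h (pow_ne_zero _ (neg_ne_zero.mpr one_ne_zero))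
    · exact h
  have hAkfact : A ^ k = M ^ (n - r) * (A ^ k * X ^ ((k + 1) * (n - r))) := by
    rw [hM, ← pow_mul, ← Matrix.mul_assoc, ← pow_add,
      show (k + 1) * (n - r) + k = k + (k + 1) * (n - r) from Nat.add_comm _ _,
      hAkX ((k + 1) * (n - r))]
  have hGcrAk : Gc r * A ^ k = 0 := by
    rw [hAkfact, ← Matrix.mul_assoc,
      ← hGcomm r (M ^ (n - r)) ((Commute.refl M).pow_left (n - r)).eq,
      hMGr, Matrix.zero_mul]
  have hkey : Gc (r - 1) * A ^ k = dp.coeff r • X := by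
    have hrr : r - 1 + 1 = r := Nat.succ_pred_eq_of_pos hr1
    have h := hrec (r - 1)
    rw [hrr] at h
    have h4 := congrArg (fun Z => Z * A ^ k) h
    simp only [Matrix.add_mul, Matrix.smul_mul, Matrix.one_mul] at h4
    rw [hGcrAk, zero_add] at h4
    have h5 := congrArg (fun Z => X ^ (k + 1) * Z) h4
    simp only [Matrix.mul_smul, ← Matrix.mul_assoc] at h5
    rw [hWM, hGcomm (r - 1) (A * X) (by rw [hPMl, hMP]), Matrix.mul_assoc, hPAkr,
      hXk1Ak] at h5
    exact h5
  -- ## identification of numerator and denominator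
  set g : Fin n → ℂ := (A ^ k).mulVec y with hg
  have hden : (∑ β : Finset (Fin n), if h : β.card = r then
      det (M.submatrix (β.orderEmbOfFin h) (β.orderEmbOfFin h)) else 0) = dp.coeff r := by
    rw [hdp, hNt, hMp, aux_det_one_add M, Polynomial.finset_sum_coeff]
    refine (Finset.sum_congr rfl fun β _ => ?_).symm
    rw [mul_comm, Polynomial.C_mul_X_pow_eq_monomial, Polynomial.coeff_monomial]
    by_cases hc : β.card = r
    · rw [if_pos hc, dif_pos hc, aux_minor_congr M β hc]
    · rw [if_neg hc, dif_neg hc]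
  have hnum : (∑ β : Finset (Fin n), if i ∈ β then
      (if h : β.card = r then
        det ((M.updateCol i g).submatrix (β.orderEmbOfFin h) (β.orderEmbOfFin h))
      else 0) else 0) = ((Gc (r - 1)).mulVec g) i := by
    have hF : Matrix.det (Nt.updateCol i
          ((Polynomial.X : Polynomial ℂ) • fun j => Polynomial.C (g j)))
        = ∑ β : Finset (Fin n), (if i ∈ β then (Polynomial.X : Polynomial ℂ) ^ β.card *
            Polynomial.C (Matrix.det ((M.updateCol i g).submatrix
              (β.orderEmbOfFin rfl) (β.orderEmbOfFin rfl))) else 0) := by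
      rw [hNt, hMp]
      exact aux_det_updateColumn_expand M g i
    have hFc := congrArg (fun p => Polynomial.coeff p r) hF
    rw [Polynomial.finset_sum_coeff] at hFc
    have hF2 : Matrix.det (Nt.updateCol i
          ((Polynomial.X : Polynomial ℂ) • fun j => Polynomial.C (g j)))
        = Polynomial.X * ((G.mulVec fun j => Polynomial.C (g j)) i) := by
      rw [Matrix.det_updateCol_smul]
      congr 1
      rw [hG, ← Matrix.cramer_eq_adjugate_mulVec, Matrix.cramer_apply]
    rw [hF2] at hFc
    have hcoeffX : (Polynomial.X * ((G.mulVec fun j => Polynomial.C (g j)) i)).coeff r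
        = ((Gc (r - 1)).mulVec g) i := by
      rw [show r = (r - 1) + 1 by omega, Polynomial.coeff_X_mul]
      rw [Matrix.mulVec, Matrix.mulVec, dotProduct, dotProduct, Polynomial.finset_sum_coeff]
      refine Finset.sum_congr rfl fun l _ => ?_
      rw [Polynomial.coeff_mul_C]
      rfl
    rw [hcoeffX] at hFc
    rw [hFc]
    refine Finset.sum_congr rfl fun β _ => ?_
    by_cases hi : i ∈ β
    · rw [if_pos hi, if_pos hi, mul_comm, Polynomial.C_mul_X_pow_eq_monomial,
        Polynomial.coeff_monomial]
      by_cases hc : β.card = r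
      · rw [dif_pos hc, if_pos hc, ← aux_minor_congr _ β hc]
      · rw [dif_neg hc, if_neg hc]
    · rw [if_neg hi, if_neg hi, Polynomial.coeff_zero]
  have hfin : ((Gc (r - 1)).mulVec g) i = dp.coeff r * X.mulVec y i := by
    rw [hg, Matrix.mulVec_mulVec, hkey, Matrix.smul_mulVec]
    simp [Pi.smul_apply, smul_eq_mul]
  rw [hnum, hden, hfin]
  rw [mul_div_cancel_left₀ _ (her ▸ hdetN')]
end
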